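/- For every positive integer n and every nonnegative matrix A ∈ ℝ^{n×n} with spectrum Λ = (λ_1,…,λ_n), the power sums s_k(Λ) = Σ_i λ_i^k satisfy s_k(Λ)^m ≤ n^{m-1} · s_{km}(Λ) for all positive integers k, m. -/

import Mathlib

open Matrix Polynomial


section helpers
variable {R : Type*} [CommRing R]

private lemma jll_fromBlocks_pow {s t : Type*} [Fintype s] [Fintype t] [DecidableEq s]
    [DecidableEq t] (A : Matrix s s R) (B : Matrix s t R) (D : Matrix t t R) (k : ℕ) :
    ∃ E, (fromBlocks A B 0 D) ^ k = fromBlocks (A ^ k) E 0 (D ^ k) := by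
  induction k with
  | zero => exact ⟨0, by simp [← fromBlocks_one]⟩
  | succ k ih =>
    obtain ⟨E, hE⟩ := ih
    refine ⟨A ^ k * B + E * D, ?_⟩
    rw [pow_succ, hE, fromBlocks_multiply]
    simp [pow_succ]

private lemma jll_charpoly_conj {ι : Type*} [Fintype ι] [DecidableEq ι]
    (u : (Matrix ι ι R)ˣ) (B : Matrix ι ι R) :
    (((u⁻¹ : (Matrix ι ι R)ˣ) : Matrix ι ι R) * B * (u : Matrix ι ι R)).charpoly = B.charpoly := by
  let f : Matrix ι ι R →+* Matrix ι ι R[X] := (C : R →+* R[X]).mapMatrix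
  have hscal : ∀ M : Matrix ι ι R, Matrix.scalar ι (X : R[X]) * f M = f M * Matrix.scalar ι X := by
    intro M
    ext i j
    simp [Matrix.scalar, mul_apply, Matrix.diagonal, mul_comm]
  have key : charmatrix (((u⁻¹ : (Matrix ι ι R)ˣ) : Matrix ι ι R) * B * (u : Matrix ι ι R)) = f ↑u⁻¹ * charmatrix B * f ↑u := by
    show Matrix.scalar ι (X : R[X]) - f (((u⁻¹ : (Matrix ι ι R)ˣ) : Matrix ι ι R) * B * (u : Matrix ι ι R)) = _
    have h1 : Matrix.scalar ι (X : R[X]) = f ↑u⁻¹ * Matrix.scalar ι (X : R[X]) * f ↑u := by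
      rw [← hscal, mul_assoc, ← _root_.map_mul, Units.inv_mul, _root_.map_one, mul_one]
    have hcm : B.charmatrix = Matrix.scalar ι X - f B := rfl
    rw [_root_.map_mul, _root_.map_mul, hcm, mul_sub, sub_mul, ← h1]
  have hdet : (f ↑u⁻¹).det * (f ↑u).det = 1 := by
    rw [← det_mul, ← _root_.map_mul, Units.inv_mul, _root_.map_one, det_one]
  calc (((u⁻¹ : (Matrix ι ι R)ˣ) : Matrix ι ι R) * B * (u : Matrix ι ι R)).charpoly
      = (f ↑u⁻¹ * charmatrix B * f ↑u).det := by rw [Matrix.charpoly, key]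
    _ = (f ↑u⁻¹).det * (f ↑u).det * (charmatrix B).det := by rw [det_mul, det_mul]; ring
    _ = B.charpoly := by rw [hdet, one_mul, Matrix.charpoly]

end helpers

private lemma jll_trace_pow_aux (n : ℕ) :
    ∀ (ι : Type) (_ : Fintype ι) (_ : DecidableEq ι), Fintype.card ι = n →
      ∀ (B : Matrix ι ι ℂ) (k : ℕ),
        (B ^ k).trace = (B.charpoly.roots.map (· ^ k)).sum := by
  induction n with
  | zero =>
    intro ι _ _ hcard B k
    haveI : IsEmpty ι := Fintype.card_eq_zero_iff.mp hcard
    have h1 : B.charpoly = 1 := by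
      rw [Matrix.charpoly, det_isEmpty]
    simp [Matrix.trace, h1]
  | succ n ih =>
    intro ι _ _ hcard B k
    haveI : Nonempty ι := Fintype.card_pos_iff.mp (by omega)
    -- find an eigenvalue
    have hdeg : 0 < B.charpoly.degree := by
      rw [Matrix.charpoly_degree_eq_dim, hcard]
      exact_mod_cast Nat.succ_pos n
    obtain ⟨μ, hμ⟩ := Complex.exists_root hdeg
    -- find an eigenvector
    have hdet : (μ • (1 : Matrix ι ι ℂ) - B).det = 0 := by
      have : (charmatrix B).map (evalRingHom μ) = μ • (1 : Matrix ι ι ℂ) - B := by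
        ext i j
        by_cases h : i = j <;>
          simp [h, charmatrix_apply, Matrix.diagonal, Matrix.one_apply, Matrix.sub_apply]
      calc (μ • (1 : Matrix ι ι ℂ) - B).det
          = ((charmatrix B).map (evalRingHom μ)).det := by rw [this]
        _ = evalRingHom μ (charmatrix B).det := by
            rw [← RingHom.mapMatrix_apply, ← RingHom.map_det]
        _ = 0 := hμ
    obtain ⟨v, hv0, hNv⟩ := (Matrix.exists_mulVec_eq_zero_iff).mpr hdet
    have hBv : B.mulVec v = μ • v := by
      have := hNv
      rw [Matrix.sub_mulVec, Matrix.smul_mulVec, Matrix.one_mulVec, sub_eq_zero] at this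
      exact this.symm
    obtain ⟨i0, hi0⟩ : ∃ i0, v i0 ≠ 0 := Function.ne_iff.mp hv0
    -- invertible matrix with column i0 equal to v
    set P : Matrix ι ι ℂ := (1 : Matrix ι ι ℂ).updateCol i0 v with hP
    have hdetP : P.det = v i0 := by
      have := Matrix.cramer_one (n := ι) (α := ℂ)
      have h1 : Matrix.cramer (1 : Matrix ι ι ℂ) v i0 = v i0 := by rw [this]; rfl
      rw [Matrix.cramer_apply] at h1
      exact h1
    have hPunit : IsUnit P := by
      rw [Matrix.isUnit_iff_isUnit_det, hdetP]
      exact hi0.isUnit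
    obtain ⟨u, hu⟩ := hPunit
    -- the conjugated matrix
    set M : Matrix ι ι ℂ := ((u⁻¹ : (Matrix ι ι ℂ)ˣ) : Matrix ι ι ℂ) * B * P with hM
    have hPe : P.mulVec (Pi.single i0 1) = v := by
      ext l
      rw [Matrix.mulVec_single]
      simp [hP, Matrix.updateCol_apply]
    have huv : ((u⁻¹ : (Matrix ι ι ℂ)ˣ) : Matrix ι ι ℂ).mulVec v = Pi.single i0 1 := by
      rw [← hPe, Matrix.mulVec_mulVec, ← hu, Units.inv_mul, Matrix.one_mulVec]
    have hcol : ∀ j, M j i0 = μ * (Pi.single i0 (1:ℂ) : ι → ℂ) j := by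
      intro j
      have h1 : M j i0 = (M.mulVec (Pi.single i0 1)) j := by
        simp [Matrix.mulVec_single]
      rw [h1, hM, ← Matrix.mulVec_mulVec, hPe, ← Matrix.mulVec_mulVec, hBv,
        Matrix.mulVec_smul, huv]
      simp
    -- block decomposition along i0
    let e : {a : ι // a = i0} ⊕ {a : ι // ¬ a = i0} ≃ ι := Equiv.sumCompl (· = i0)
    haveI : Unique {a : ι // a = i0} := ⟨⟨⟨i0, rfl⟩⟩, fun x => Subtype.ext x.2⟩
    set Cm : Matrix _ _ ℂ := M.submatrix e e with hCm
    have h21 : Cm.toBlocks₂₁ = 0 := by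
      ext b a
      have hb : (b : ι) ≠ i0 := b.2
      simp only [hCm, Matrix.toBlocks₂₁, Matrix.submatrix_apply, Matrix.of_apply,
        Matrix.zero_apply, e, Equiv.sumCompl_apply_inr, Equiv.sumCompl_apply_inl]
      rw [a.2, hcol, Pi.single_apply, if_neg hb, mul_zero]
    have hCfb : Cm = fromBlocks Cm.toBlocks₁₁ Cm.toBlocks₁₂ 0 Cm.toBlocks₂₂ := by
      rw [← h21, fromBlocks_toBlocks]
    have hchar1 : M.charpoly = B.charpoly := by
      have := jll_charpoly_conj u B
      rw [hM, ← hu]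
      exact this
    have hchar2 : Cm.charpoly = M.charpoly := by
      have h := Matrix.charpoly_reindex e.symm M
      simpa [Matrix.reindex_apply, Equiv.symm_symm] using h
    set d : {a : ι // a = i0} := ⟨i0, rfl⟩ with hd
    have hA11 : ∀ a b, Cm.toBlocks₁₁ a b = μ := by
      intro a b
      have ha : (a : ι) = i0 := a.2
      have hb : (b : ι) = i0 := b.2
      simp [hCm, Matrix.toBlocks₁₁, e, ha, hb, hcol, Pi.single_apply]
    have hcharp11 : Cm.toBlocks₁₁.charpoly = X - C μ := by
      rw [Matrix.charpoly, Matrix.det_unique, charmatrix_apply_eq, hA11]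
    have hchar3 : Cm.charpoly = (X - C μ) * (Cm.toBlocks₂₂).charpoly := by
      conv_lhs => rw [hCfb]
      rw [charpoly_fromBlocks_zero₂₁, hcharp11]
    have hroots : B.charpoly.roots = μ ::ₘ (Cm.toBlocks₂₂).charpoly.roots := by
      rw [← hchar1, ← hchar2, hchar3, roots_mul, roots_X_sub_C, Multiset.singleton_add]
      exact mul_ne_zero (X_sub_C_ne_zero μ) (Matrix.charpoly_monic _).ne_zero
    -- traces
    have htr1 : (B ^ k).trace = (M ^ k).trace := by
      have hMk : M ^ k = ((u⁻¹ : (Matrix ι ι ℂ)ˣ) : Matrix ι ι ℂ) * B ^ k * P := by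
        rw [hM, ← hu]
        exact Units.conj_pow' u B k
      rw [hMk, ← hu, Matrix.trace_mul_comm, ← mul_assoc, Units.mul_inv, one_mul]
    have htr2 : (M ^ k).trace = (Cm ^ k).trace := by
      have hpow : Cm ^ k = (M ^ k).submatrix e e := by
        have h := map_pow (reindexAlgEquiv ℂ ℂ e.symm) M k
        simp only [reindexAlgEquiv_apply, Matrix.reindex_apply, Equiv.symm_symm] at h
        exact h.symm
      rw [hpow]
      simp only [Matrix.trace, Matrix.diag, Matrix.submatrix_apply]
      exact (Equiv.sum_comp e fun i => (M ^ k) i i).symm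
    have h11pow : ∀ j : ℕ, (Cm.toBlocks₁₁ ^ j) d d = μ ^ j := by
      intro j
      induction j with
      | zero => simp [Matrix.one_apply]
      | succ j hj =>
        rw [pow_succ, Matrix.mul_apply, pow_succ]
        rw [Finset.sum_eq_single d (fun b _ hb => absurd (Subtype.ext (b.2.trans d.2.symm)) hb)
          (fun h => absurd (Finset.mem_univ d) h)]
        rw [hj, hA11]
    obtain ⟨E, hE⟩ := jll_fromBlocks_pow Cm.toBlocks₁₁ Cm.toBlocks₁₂ Cm.toBlocks₂₂ k
    have htr3 : (Cm ^ k).trace = μ ^ k + ((Cm.toBlocks₂₂) ^ k).trace := by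
      conv_lhs => rw [hCfb]
      rw [hE]
      have : (fromBlocks (Cm.toBlocks₁₁ ^ k) E 0 (Cm.toBlocks₂₂ ^ k)).trace
          = (Cm.toBlocks₁₁ ^ k).trace + (Cm.toBlocks₂₂ ^ k).trace := by
        simp [Matrix.trace, Fintype.sum_sum_type, Matrix.fromBlocks, Matrix.diag]
      rw [this]
      congr 1
      rw [Matrix.trace, Fintype.sum_unique]
      have hdd : (default : {a : ι // a = i0}) = d :=
        Subtype.ext ((default : {a : ι // a = i0}).2)
      show (Cm.toBlocks₁₁ ^ k) default default = μ ^ k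
      rw [hdd]
      exact h11pow k
    have hcards : Fintype.card {a : ι // ¬ a = i0} = n := by
      have h1 := Fintype.card_subtype_compl (fun a : ι => a = i0)
      rw [Fintype.card_subtype_eq, hcard] at h1
      simpa using h1
    have hIH := ih _ _ (Subtype.instDecidableEq) hcards (Cm.toBlocks₂₂) k
    rw [htr1, htr2, htr3, hIH, hroots, Multiset.map_cons, Multiset.sum_cons]

private lemma jll_trace_pow {ι : Type} [Fintype ι] [DecidableEq ι] (B : Matrix ι ι ℂ) (k : ℕ) :
    (B ^ k).trace = (B.charpoly.roots.map (· ^ k)).sum :=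
  jll_trace_pow_aux (Fintype.card ι) ι _ _ rfl B k

private lemma jll_pow_entry_nonneg {n : ℕ} (A : Matrix (Fin n) (Fin n) ℝ)
    (hA : ∀ i j, 0 ≤ A i j) (k : ℕ) : ∀ i j, 0 ≤ (A ^ k) i j := by
  induction k with
  | zero => intro i j; rw [pow_zero]; by_cases h : i = j <;> simp [Matrix.one_apply, h]
  | succ k ih =>
    intro i j
    rw [pow_succ, Matrix.mul_apply]
    exact Finset.sum_nonneg fun l _ => mul_nonneg (ih i l) (hA l j)

private lemma jll_diag_pow {n : ℕ} (B : Matrix (Fin n) (Fin n) ℝ)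
    (hB : ∀ i j, 0 ≤ B i j) (m : ℕ) (i : Fin n) : (B i i) ^ m ≤ (B ^ m) i i := by
  induction m with
  | zero => simp [Matrix.one_apply]
  | succ m ih =>
    rw [pow_succ, pow_succ, Matrix.mul_apply]
    calc B i i ^ m * B i i ≤ (B ^ m) i i * B i i :=
          mul_le_mul_of_nonneg_right ih (hB i i)
      _ ≤ ∑ l, (B ^ m) i l * B l i :=
          Finset.single_le_sum (f := fun l => (B ^ m) i l * B l i)
            (fun l _ => mul_nonneg (jll_pow_entry_nonneg B hB m i l) (hB l i))
            (Finset.mem_univ i)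

/-- JLL inequality: for an entrywise nonnegative `n × n` real matrix `A` with
spectrum `λ₁, …, λₙ`, the power sums satisfy `s_k(Λ)^m ≤ n^(m-1) s_{km}(Λ)`. -/
theorem jll_inequality (n : ℕ) (hn : 0 < n) (A : Matrix (Fin n) (Fin n) ℝ)
    (hA : ∀ i j, 0 ≤ A i j) (lam : Fin n → ℂ)
    (hspec : (A.map (fun x => (x : ℂ))).charpoly =
      ∏ i, (Polynomial.X - Polynomial.C (lam i)))
    (k m : ℕ) (hk : 0 < k) (hm : 0 < m) :
    ((∑ i, lam i ^ k) ^ m).re ≤ (n : ℝ) ^ (m - 1) * (∑ i, lam i ^ (k * m)).re := by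
  have key : ∀ j : ℕ, (∑ i, lam i ^ j) = ((Matrix.trace (A ^ j) : ℝ) : ℂ) := by
    intro j
    have h1 : ((A.map (fun x => (x : ℂ))) ^ j).trace
        = ((A.map (fun x => (x : ℂ))).charpoly.roots.map (· ^ j)).sum := jll_trace_pow _ j
    have hroots : (A.map (fun x => (x : ℂ))).charpoly.roots
        = Multiset.map lam Finset.univ.val := by
      rw [hspec]
      have h2 : (∏ i, (X - C (lam i)))
          = ((Multiset.map lam Finset.univ.val).map (fun a => X - C a)).prod := by
        rw [Multiset.map_map]; rfl
      rw [h2, roots_multiset_prod_X_sub_C]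
    have hmap : (A.map (fun x => (x : ℂ))) ^ j = (A ^ j).map (fun x => (x : ℂ)) := by
      have h := map_pow (Complex.ofRealHom.mapMatrix (m := Fin n)) A j
      have h' := h.symm
      simp only [RingHom.mapMatrix_apply] at h'
      exact h'
    have h3 : ((A ^ j).map (fun x => (x : ℂ))).trace = ((Matrix.trace (A ^ j) : ℝ) : ℂ) := by
      simp [Matrix.trace, Matrix.diag, Matrix.map_apply]
    have h4 : ((Multiset.map lam Finset.univ.val).map (· ^ j)).sum = ∑ i, lam i ^ j := by
      rw [Multiset.map_map]; rfl
    rw [← h4, ← hroots, ← h1, hmap, h3]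
  rw [key k, key (k * m), ← Complex.ofReal_pow, Complex.ofReal_re, Complex.ofReal_re]
  set B := A ^ k with hB
  have hBnn := jll_pow_entry_nonneg A hA k
  have hBm : A ^ (k * m) = B ^ m := by rw [hB, pow_mul]
  rw [hBm]
  have hm' : m - 1 + 1 = m := Nat.succ_pred_eq_of_pos hm
  have htr : Matrix.trace B = ∑ i, B i i := rfl
  have h1 : (Matrix.trace B) ^ m ≤ (n : ℝ) ^ (m - 1) * ∑ i, (B i i) ^ m := by
    have h := pow_sum_div_card_le_sum_pow (s := Finset.univ)
      (f := fun i : Fin n => B i i) (fun i _ => hBnn i i) (m - 1)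
    rw [hm', Finset.card_univ, Fintype.card_fin] at h
    rw [htr]
    have hpos : (0 : ℝ) < (n : ℝ) ^ (m - 1) := by positivity
    calc (∑ i, B i i) ^ m = ((∑ i, B i i) ^ m / (n : ℝ) ^ (m - 1)) * (n : ℝ) ^ (m - 1) := by
          field_simp
      _ ≤ (∑ i, (B i i) ^ m) * (n : ℝ) ^ (m - 1) :=
          mul_le_mul_of_nonneg_right h hpos.le
      _ = (n : ℝ) ^ (m - 1) * ∑ i, (B i i) ^ m := mul_comm _ _
  have h2 : ∑ i, (B i i) ^ m ≤ Matrix.trace (B ^ m) :=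
    Finset.sum_le_sum fun i _ => jll_diag_pow B hBnn m i
  calc (Matrix.trace B) ^ m ≤ (n : ℝ) ^ (m - 1) * ∑ i, (B i i) ^ m := h1
    _ ≤ (n : ℝ) ^ (m - 1) * Matrix.trace (B ^ m) :=
        mul_le_mul_of_nonneg_left h2 (by positivity)
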